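/- arXiv:math/9912247 — 4 statements merged into one kernel-verified Lean document; each statement's English description precedes it below -/
import Mathlib

section
/- Let L be a unimodular subgroup of ℤ^n. Then for every u in the real span ℝL of L there exists a lattice point v ∈ L with ⌊u_i⌋ ≤ v_i ≤ ⌈u_i⌉ for all i = 1,…,n; that is, every closed face of the arrangement H_L contains a point of L. -/
/-- A sublattice `L ⊆ ℤ^ι` is *unimodular* if it is the image of an injective linear map given
by an integer matrix `B` with linearly independent columns, all of whose maximal minors lie in
`{0, 1, -1}`. -/
def IsUnimodular {ι : Type*} [Fintype ι] (L : Submodule ℤ (ι → ℤ)) : Prop :=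
  ∃ (m : ℕ) (B : Matrix ι (Fin m) ℤ),
    LinearIndependent ℤ B.transpose ∧
    (∀ r : Fin m ↪ ι, (B.submatrix r id).det ∈ ({0, 1, -1} : Set ℤ)) ∧
    L = LinearMap.range B.mulVecLin

/-- The canonical map `ℤ^n → ℝ^n`. -/
def intCastVec {n : ℕ} (v : Fin n → ℤ) : Fin n → ℝ := fun i => (v i : ℝ)

/-- `ℝL`, the real span of a lattice `L ⊆ ℤ^n` inside `ℝ^n`. -/
def realSpan {n : ℕ} (L : Submodule ℤ (Fin n → ℤ)) : Submodule ℝ (Fin n → ℝ) :=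
  Submodule.span ℝ (intCastVec '' (L : Set (Fin n → ℤ)))

open scoped Classical

/-- Coordinatewise cast `ℤ^n → ℚ^n` as a `ℤ`-linear map. -/
def castLinQ (n : ℕ) : (Fin n → ℤ) →ₗ[ℤ] (Fin n → ℚ) where
  toFun v := fun i => ((v i : ℚ))
  map_add' a b := funext fun i => by push_cast [Pi.add_apply]; ring
  map_smul' z v := funext fun i => by
    push_cast [Pi.smul_apply, zsmul_eq_mul]
    simp [mul_comm]

/-- Row selection: if the rows of `M` indexed by `T` have trivial kernel (as a linear system),
then one can select `m` rows from `T` forming an invertible square submatrix. -/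
lemma rowSelect {K : Type*} [Field K] {n m : ℕ} (M : Matrix (Fin n) (Fin m) K)
    (T : Finset (Fin n))
    (hker : ∀ d : Fin m → K, (∀ i ∈ T, M.mulVec d i = 0) → d = 0) :
    ∃ r : Fin m ↪ Fin n, (∀ j, r j ∈ T) ∧ (M.submatrix r id).det ≠ 0 := by
  classical
  have hspan : Submodule.span K (M '' ↑T) = ⊤ := by
    by_contra hne
    have hlt : Submodule.span K (M '' ↑T) < ⊤ := lt_top_iff_ne_top.mpr hne
    obtain ⟨f, hf0, hfbot⟩ :=
      Submodule.exists_dual_map_eq_bot_of_lt_top hlt inferInstance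
    set d : Fin m → K := fun j => f (fun k => if j = k then 1 else 0) with hd
    have hfd : ∀ x : Fin m → K, f x = ∑ j, x j * d j := by
      intro x
      rw [LinearMap.pi_apply_eq_sum_univ f x]
      simp [hd, smul_eq_mul]
    have hdm : ∀ i ∈ T, M.mulVec d i = 0 := by
      intro i hi
      have hmem : M i ∈ Submodule.span K (M '' ↑T) :=
        Submodule.subset_span ⟨i, hi, rfl⟩
      have hMi : f (M i) = 0 := by
        have : f (M i) ∈ Submodule.map f (Submodule.span K (M '' ↑T)) :=
          Submodule.mem_map_of_mem hmem
        rw [hfbot] at this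
        exact (Submodule.mem_bot K).mp this
      calc M.mulVec d i = ∑ j, M i j * d j := by
            simp [Matrix.mulVec, dotProduct]
        _ = f (M i) := (hfd (M i)).symm
        _ = 0 := hMi
    have hd0 : d = 0 := hker d hdm
    apply hf0
    refine LinearMap.ext fun x => ?_
    rw [hfd x, hd0]
    simp
  obtain ⟨s, hst, hsp, hli⟩ := exists_linearIndependent K (M '' ↑T)
  have hsfin : s.Finite := (T.finite_toSet.image M).subset hst
  haveI : Fintype s := hsfin.fintype
  have hbasis : Module.Basis s K (Fin m → K) := Module.Basis.mk hli (by
    rw [Subtype.range_coe, hsp, hspan])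
  have hcard : Fintype.card s = m := by
    have h1 := Module.finrank_eq_card_basis hbasis
    have h2 : Module.finrank K (Fin m → K) = m := by simp
    omega
  let e : Fin m ≃ s := (Fintype.equivFinOfCardEq hcard).symm
  have hpick : ∀ v : s, ∃ i, i ∈ T ∧ M i = (v : Fin m → K) := by
    intro v
    obtain ⟨i, hi, hMi⟩ := hst v.2
    exact ⟨i, hi, hMi⟩
  choose pick pickT pickM using hpick
  have hrinj : Function.Injective (fun j : Fin m => pick (e j)) := by
    intro j j' h
    apply e.injective
    apply Subtype.ext
    rw [← pickM (e j), ← pickM (e j')]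
    exact congrArg M h
  refine ⟨⟨fun j => pick (e j), hrinj⟩, fun j => pickT (e j), ?_⟩
  have hrows : LinearIndependent K (fun j : Fin m => M (pick (e j))) := by
    have heq : (fun j : Fin m => M (pick (e j)))
        = (fun j : Fin m => ((e j : s) : Fin m → K)) :=
      funext fun j => pickM (e j)
    rw [heq]
    exact hli.comp e e.injective
  have hunit : IsUnit (M.submatrix (fun j => pick (e j)) id) := by
    rw [← Matrix.linearIndependent_rows_iff_isUnit]
    exact hrows
  have := (Matrix.isUnit_iff_isUnit_det _).mp hunit
  exact this.ne_zero

/-- Solving an integer unimodular system with integral right-hand side gives an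
integral solution. -/
lemma intSolve {n m : ℕ} (B : Matrix (Fin n) (Fin m) ℤ)
    (hmin : ∀ r : Fin m ↪ Fin n, (B.submatrix r id).det ∈ ({0, 1, -1} : Set ℤ))
    (r : Fin m ↪ Fin n) (hdet : (B.submatrix r id).det ≠ 0)
    (x : Fin m → ℝ) (w : Fin m → ℤ)
    (hw : ∀ j, (B.map (Int.cast : ℤ → ℝ)).mulVec x (r j) = (w j : ℝ)) :
    ∃ z : Fin m → ℤ, x = fun j => ((z j : ℝ)) := by
  classical
  set C : Matrix (Fin m) (Fin m) ℤ := B.submatrix r id with hC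
  have hunit : IsUnit C.det := by
    rcases hmin r with h | h | h
    · exact absurd h hdet
    · rw [h]; exact isUnit_one
    · rw [h]; exact (isUnit_one.neg)
  set f : ℤ →+* ℝ := Int.castRingHom ℝ with hf
  have hCr : (C.map (Int.cast : ℤ → ℝ)).mulVec x = fun j => ((w j : ℝ)) := by
    funext j
    have h1 : (C.map (Int.cast : ℤ → ℝ)).mulVec x j
        = (B.map (Int.cast : ℤ → ℝ)).mulVec x (r j) := by
      simp [hC, Matrix.mulVec, dotProduct, Matrix.submatrix, Matrix.map_apply]
    rw [h1, hw]
  have hinv : (C⁻¹.map (Int.cast : ℤ → ℝ)) * (C.map (Int.cast : ℤ → ℝ)) = 1 := by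
    have h2 : (C⁻¹ * C).map (Int.cast : ℤ → ℝ) = 1 := by
      rw [Matrix.nonsing_inv_mul C hunit]
      simp [Matrix.map_one]
    rw [← h2]
    exact (Matrix.map_mul (f := f)).symm
  refine ⟨C⁻¹.mulVec w, ?_⟩
  calc x = ((C⁻¹.map (Int.cast : ℤ → ℝ)) * (C.map (Int.cast : ℤ → ℝ))).mulVec x := by
        rw [hinv, Matrix.one_mulVec]
    _ = (C⁻¹.map (Int.cast : ℤ → ℝ)).mulVec ((C.map (Int.cast : ℤ → ℝ)).mulVec x) :=
        (Matrix.mulVec_mulVec x _ _).symm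
    _ = (C⁻¹.map (Int.cast : ℤ → ℝ)).mulVec (fun j => ((w j : ℝ))) := by rw [hCr]
    _ = fun j => ((C⁻¹.mulVec w j : ℝ)) := by
        funext j
        exact (RingHom.map_mulVec f _ _ j).symm

/-- Case A: if the integral rows of the current point have full column rank, the point is
itself integral. -/
lemma caseA {n m : ℕ} (B : Matrix (Fin n) (Fin m) ℤ)
    (hmin : ∀ r : Fin m ↪ Fin n, (B.submatrix r id).det ∈ ({0, 1, -1} : Set ℤ))
    (T : Finset (Fin n))
    (hker : ∀ d : Fin m → ℝ,
      (∀ i ∈ T, (B.map (Int.cast : ℤ → ℝ)).mulVec d i = 0) → d = 0)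
    (x : Fin m → ℝ)
    (hT : ∀ i ∈ T, ∃ g : ℤ, (B.map (Int.cast : ℤ → ℝ)).mulVec x i = (g : ℝ)) :
    ∃ z : Fin m → ℤ, x = fun j => ((z j : ℝ)) := by
  classical
  obtain ⟨r, hrT, hrdet⟩ := rowSelect (B.map (Int.cast : ℤ → ℝ)) T hker
  have hdetZ : (B.submatrix r id).det ≠ 0 := by
    intro h0
    apply hrdet
    have : (B.map (Int.cast : ℤ → ℝ)).submatrix r id
        = (Int.castRingHom ℝ).mapMatrix (B.submatrix r id) := by
      ext i j; simp [Matrix.submatrix, Matrix.map_apply]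
    rw [this, ← RingHom.map_det, h0]
    simp
  choose w hw using fun j => hT (r j) (hrT j)
  exact intSolve B hmin r hdetZ x w hw

open Finset in
/-- Main induction: from any point of the box in the column space, one can reach an
integral lattice point of the box. -/
lemma roundStep {n m : ℕ} (B : Matrix (Fin n) (Fin m) ℤ)
    (hmin : ∀ r : Fin m ↪ Fin n, (B.submatrix r id).det ∈ ({0, 1, -1} : Set ℤ))
    (hA : ∀ d : Fin m → ℝ, (B.map (Int.cast : ℤ → ℝ)).mulVec d = 0 → d = 0)
    (u : Fin n → ℝ) :
    ∀ (k : ℕ) (x : Fin m → ℝ),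
      (∀ i, (⌊u i⌋ : ℝ) ≤ (B.map (Int.cast : ℤ → ℝ)).mulVec x i ∧
        (B.map (Int.cast : ℤ → ℝ)).mulVec x i ≤ (⌈u i⌉ : ℝ)) →
      (Finset.univ.filter
        (fun i => ¬ ∃ g : ℤ, (B.map (Int.cast : ℤ → ℝ)).mulVec x i = (g : ℝ))).card ≤ k →
      ∃ z : Fin m → ℤ,
        (∀ i, (⌊u i⌋ : ℝ) ≤ (B.map (Int.cast : ℤ → ℝ)).mulVec (fun j => ((z j : ℝ))) i ∧
          (B.map (Int.cast : ℤ → ℝ)).mulVec (fun j => ((z j : ℝ))) i ≤ (⌈u i⌉ : ℝ)) := by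
  classical
  set A : Matrix (Fin n) (Fin m) ℝ := B.map (Int.cast : ℤ → ℝ) with hAdef
  intro k
  induction k with
  | zero =>
    intro x hbox hcard
    have hall : ∀ i, ∃ g : ℤ, A.mulVec x i = (g : ℝ) := by
      intro i
      by_contra hni
      have : i ∈ Finset.univ.filter
          (fun i => ¬ ∃ g : ℤ, A.mulVec x i = (g : ℝ)) :=
        Finset.mem_filter.mpr ⟨Finset.mem_univ i, hni⟩
      have := Finset.card_pos.mpr ⟨i, this⟩
      omega
    obtain ⟨z, hz⟩ := caseA B hmin Finset.univ
      (fun d hd => hA d (funext fun i => hd i (Finset.mem_univ i)))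
      x (fun i _ => hall i)
    exact ⟨z, by rw [← hz]; exact hbox⟩
  | succ k ih =>
    intro x hbox hcard
    set T : Finset (Fin n) :=
      Finset.univ.filter (fun i => ∃ g : ℤ, A.mulVec x i = (g : ℝ)) with hT
    by_cases hker : ∀ d : Fin m → ℝ, (∀ i ∈ T, A.mulVec d i = 0) → d = 0
    · obtain ⟨z, hz⟩ := caseA B hmin T hker x
        (fun i hi => (Finset.mem_filter.mp hi).2)
      exact ⟨z, by rw [← hz]; exact hbox⟩
    · push_neg at hker
      obtain ⟨d, hdT, hd0⟩ := hker
      have hAd : A.mulVec d ≠ 0 := fun h => hd0 (hA d h)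
      set J : Finset (Fin n) := Finset.univ.filter (fun i => A.mulVec d i ≠ 0) with hJ
      have hJne : J.Nonempty := by
        obtain ⟨i, hi⟩ := Function.ne_iff.mp hAd
        exact ⟨i, Finset.mem_filter.mpr ⟨Finset.mem_univ i, by simpa using hi⟩⟩
      have hJnotT : ∀ i ∈ J, ¬ ∃ g : ℤ, A.mulVec x i = (g : ℝ) := by
        intro i hi hint
        have : i ∈ T := by simp [hT, hint]
        exact (Finset.mem_filter.mp hi).2 (hdT i this)
      have hstrict : ∀ i ∈ J, (⌊u i⌋ : ℝ) < A.mulVec x i ∧ A.mulVec x i < (⌈u i⌉ : ℝ) := by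
        intro i hi
        constructor
        · rcases lt_or_eq_of_le (hbox i).1 with h | h
          · exact h
          · exact absurd ⟨⌊u i⌋, h.symm⟩ (hJnotT i hi)
        · rcases lt_or_eq_of_le (hbox i).2 with h | h
          · exact h
          · exact absurd ⟨⌈u i⌉, h⟩ (hJnotT i hi)
      set t : Fin n → ℝ := fun i =>
        if 0 < A.mulVec d i then ((⌈u i⌉ : ℝ) - A.mulVec x i) / A.mulVec d i
        else ((⌊u i⌋ : ℝ) - A.mulVec x i) / A.mulVec d i with ht
      have htpos : ∀ i ∈ J, 0 < t i := by
        intro i hi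
        have hne := (Finset.mem_filter.mp hi).2
        rcases lt_trichotomy (A.mulVec d i) 0 with hc | hc | hc
        · rw [ht]
          simp only [if_neg (not_lt.mpr hc.le)]
          exact div_pos_of_neg_of_neg (by linarith [(hstrict i hi).1]) hc
        · exact absurd hc hne
        · rw [ht]
          simp only [if_pos hc]
          exact div_pos (by linarith [(hstrict i hi).2]) hc
      obtain ⟨i0, hi0J, hi0min⟩ := Finset.exists_min_image J t hJne
      set s : ℝ := t i0 with hs
      have hspos : 0 < s := htpos i0 hi0J
      set x' : Fin m → ℝ := x + s • d with hx'
      have hAx' : ∀ i, A.mulVec x' i = A.mulVec x i + s * A.mulVec d i := by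
        intro i
        rw [hx', Matrix.mulVec_add, Matrix.mulVec_smul]
        simp [smul_eq_mul]
      -- box membership of x'
      have hbox' : ∀ i, (⌊u i⌋ : ℝ) ≤ A.mulVec x' i ∧ A.mulVec x' i ≤ (⌈u i⌉ : ℝ) := by
        intro i
        by_cases hc : A.mulVec d i = 0
        · rw [hAx' i, hc]
          simpa using hbox i
        · have hiJ : i ∈ J := by simp [hJ, hc]
          have hsi : s ≤ t i := hi0min i hiJ
          rcases lt_trichotomy (A.mulVec d i) 0 with hlt | heq | hgt
          · constructor
            · have h1 : t i * A.mulVec d i ≤ s * A.mulVec d i :=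
                mul_le_mul_of_nonpos_right hsi hlt.le
              have h2 : t i * A.mulVec d i = (⌊u i⌋ : ℝ) - A.mulVec x i := by
                rw [ht]
                simp only [if_neg (not_lt.mpr hlt.le)]
                field_simp
              rw [hAx' i]; linarith
            · have h3 : s * A.mulVec d i < 0 := mul_neg_of_pos_of_neg hspos hlt
              rw [hAx' i]; linarith [(hbox i).2]
          · exact absurd heq hc
          · constructor
            · have h3 : 0 < s * A.mulVec d i := mul_pos hspos hgt
              rw [hAx' i]; linarith [(hbox i).1]
            · have h1 : s * A.mulVec d i ≤ t i * A.mulVec d i :=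
                mul_le_mul_of_nonneg_right hsi hgt.le
              have h2 : t i * A.mulVec d i = (⌈u i⌉ : ℝ) - A.mulVec x i := by
                rw [ht]
                simp only [if_pos hgt]
                field_simp
              rw [hAx' i]; linarith
      -- integrality is preserved and gained at i0
      have hkeep : ∀ i, (∃ g : ℤ, A.mulVec x i = (g : ℝ)) →
          (∃ g : ℤ, A.mulVec x' i = (g : ℝ)) := by
        intro i hi
        have hiT : i ∈ T := by simp [hT, hi]
        have : A.mulVec d i = 0 := hdT i hiT
        rw [hAx' i, this]
        simpa using hi
      have hnew : ∃ g : ℤ, A.mulVec x' i0 = (g : ℝ) := by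
        have hc0 : A.mulVec d i0 ≠ 0 := (Finset.mem_filter.mp hi0J).2
        rw [hAx' i0]
        by_cases hgt : 0 < A.mulVec d i0
        · refine ⟨⌈u i0⌉, ?_⟩
          rw [hs, ht]
          simp only [if_pos hgt]
          field_simp
          ring
        · refine ⟨⌊u i0⌋, ?_⟩
          rw [hs, ht]
          simp only [if_neg hgt]
          field_simp
          ring
      have hsub : (Finset.univ.filter
            (fun i => ¬ ∃ g : ℤ, A.mulVec x' i = (g : ℝ)))
          ⊆ (Finset.univ.filter
            (fun i => ¬ ∃ g : ℤ, A.mulVec x i = (g : ℝ))).erase i0 := by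
        intro i hi
        have hi' := (Finset.mem_filter.mp hi).2
        rw [Finset.mem_erase]
        constructor
        · rintro rfl
          exact hi' hnew
        · refine Finset.mem_filter.mpr ⟨Finset.mem_univ i, ?_⟩
          intro hint
          exact hi' (hkeep i hint)
      have hi0mem : i0 ∈ Finset.univ.filter
          (fun i => ¬ ∃ g : ℤ, A.mulVec x i = (g : ℝ)) :=
        Finset.mem_filter.mpr ⟨Finset.mem_univ i0, hJnotT i0 hi0J⟩
      have hcard' : (Finset.univ.filter
          (fun i => ¬ ∃ g : ℤ, A.mulVec x' i = (g : ℝ))).card ≤ k := by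
        have h1 := Finset.card_le_card hsub
        have h2 := Finset.card_erase_of_mem hi0mem
        have h3 := Finset.card_pos.mpr ⟨i0, hi0mem⟩
        omega
      exact ih x' hbox' hcard'

/-- if `L` is unimodular, then for every `u` in the real span of `L` there is a
lattice point `v ∈ L` with `⌊u_i⌋ ≤ v_i ≤ ⌈u_i⌉` for all `i`; i.e. every closed face of `H_L`
contains a point of `L`. -/
theorem closedFace_contains_lattice_point
    {n : ℕ} (L : Submodule ℤ (Fin n → ℤ)) (hL : IsUnimodular L)
    (u : Fin n → ℝ) (hu : u ∈ realSpan L) :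
    ∃ v ∈ L, ∀ i, ⌊u i⌋ ≤ v i ∧ v i ≤ ⌈u i⌉ := by
  classical
  obtain ⟨m, B, hli, hmin, hLr⟩ := hL
  set A : Matrix (Fin n) (Fin m) ℝ := B.map (Int.cast : ℤ → ℝ) with hAdef
  -- cast linear independence to ℚ
  have hliQ : LinearIndependent ℚ (fun j => (B.map (Int.cast : ℤ → ℚ)).transpose j) := by
    have hinj : Function.Injective (castLinQ n) := by
      intro a b h
      funext i
      have h' : ((a i : ℚ)) = ((b i : ℚ)) := congrFun h i
      exact_mod_cast h'
    have h2 : LinearIndependent ℤ (fun j => castLinQ n (B.transpose j)) :=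
      hli.map' (castLinQ n) (LinearMap.ker_eq_bot.mpr hinj)
    have h3 : (fun j => castLinQ n (B.transpose j))
        = (fun j => (B.map (Int.cast : ℤ → ℚ)).transpose j) := by
      funext j
      rfl
    rw [h3] at h2
    exact (LinearIndependent.iff_fractionRing ℤ ℚ).mp h2
  have hkerQ : ∀ d : Fin m → ℚ,
      (∀ i ∈ (Finset.univ : Finset (Fin n)),
        (B.map (Int.cast : ℤ → ℚ)).mulVec d i = 0) → d = 0 := by
    intro d hd
    have hinj : Function.Injective (B.map (Int.cast : ℤ → ℚ)).mulVec :=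
      Matrix.mulVec_injective_iff.mpr hliQ
    apply hinj
    rw [Matrix.mulVec_zero]
    exact funext fun i => hd i (Finset.mem_univ i)
  obtain ⟨r0, _, hr0det⟩ := rowSelect (B.map (Int.cast : ℤ → ℚ)) Finset.univ hkerQ
  have hdetZ : (B.submatrix r0 id).det ≠ 0 := by
    intro h0
    apply hr0det
    have heq : (B.map (Int.cast : ℤ → ℚ)).submatrix r0 id
        = (Int.castRingHom ℚ).mapMatrix (B.submatrix r0 id) := by
      ext i j; simp [Matrix.submatrix, Matrix.map_apply]
    rw [heq, ← RingHom.map_det, h0]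
    simp
  -- real kernel is trivial
  have hA : ∀ d : Fin m → ℝ, A.mulVec d = 0 → d = 0 := by
    intro d hd
    set C : Matrix (Fin m) (Fin m) ℤ := B.submatrix r0 id with hC
    have hdetR : ((C.map (Int.cast : ℤ → ℝ)).det) ≠ 0 := by
      have heq : C.map (Int.cast : ℤ → ℝ) = (Int.castRingHom ℝ).mapMatrix C := rfl
      have h' : ((C.det : ℤ) : ℝ) ≠ 0 := Int.cast_ne_zero.mpr hdetZ
      rw [heq, ← RingHom.map_det]
      simpa using h'
    have hunit : IsUnit (C.map (Int.cast : ℤ → ℝ)).det := isUnit_iff_ne_zero.mpr hdetR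
    have hCd : (C.map (Int.cast : ℤ → ℝ)).mulVec d = 0 := by
      funext j
      have h1 : (C.map (Int.cast : ℤ → ℝ)).mulVec d j = A.mulVec d (r0 j) := by
        simp [hC, hAdef, Matrix.mulVec, dotProduct, Matrix.submatrix, Matrix.map_apply]
      rw [h1, hd]
      rfl
    calc d = ((C.map (Int.cast : ℤ → ℝ))⁻¹ * (C.map (Int.cast : ℤ → ℝ))).mulVec d := by
          rw [Matrix.nonsing_inv_mul _ hunit, Matrix.one_mulVec]
      _ = (C.map (Int.cast : ℤ → ℝ))⁻¹.mulVec ((C.map (Int.cast : ℤ → ℝ)).mulVec d) :=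
          (Matrix.mulVec_mulVec d _ _).symm
      _ = 0 := by rw [hCd, Matrix.mulVec_zero]
  -- u lies in the real column space
  have hrange : u ∈ LinearMap.range A.mulVecLin := by
    have hle : realSpan L ≤ LinearMap.range A.mulVecLin := by
      rw [realSpan, Submodule.span_le]
      rintro p ⟨v, hv, rfl⟩
      rw [hLr] at hv
      obtain ⟨y, hy⟩ := hv
      refine ⟨fun j => ((y j : ℝ)), ?_⟩
      funext i
      have h2 := RingHom.map_mulVec (Int.castRingHom ℝ) B y i
      simp only [Matrix.mulVecLin_apply]
      rw [← hy]
      show A.mulVec (fun j => ((y j : ℝ))) i = ((B.mulVec y i : ℤ) : ℝ)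
      exact h2.symm
    exact hle hu
  obtain ⟨x, hx⟩ := hrange
  have hxu : A.mulVec x = u := hx
  have hbox : ∀ i, (⌊u i⌋ : ℝ) ≤ A.mulVec x i ∧ A.mulVec x i ≤ (⌈u i⌉ : ℝ) := by
    intro i
    rw [hxu]
    exact ⟨Int.floor_le (u i), Int.le_ceil (u i)⟩
  obtain ⟨z, hz⟩ := roundStep B hmin hA u
    (Finset.univ.filter
      (fun i => ¬ ∃ g : ℤ, A.mulVec x i = (g : ℝ))).card x hbox (le_refl _)
  refine ⟨B.mulVec z, ?_, ?_⟩
  · rw [hLr]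
    exact ⟨z, rfl⟩
  · intro i
    have hcast : A.mulVec (fun j => ((z j : ℝ))) i = ((B.mulVec z i : ℤ) : ℝ) :=
      (RingHom.map_mulVec (Int.castRingHom ℝ) B z i).symm
    have h1 := (hz i).1
    have h2 := (hz i).2
    rw [hcast] at h1 h2
    exact ⟨by exact_mod_cast h1, by exact_mod_cast h2⟩
end

section
/- Let L be a unimodular subgroup of ℤ^n. Then every closed face F_u (u ∈ ℝL) of the arrangement H_L is a lattice translate of a standard box: there exist v ∈ L and vectors a, b ∈ {0,1}^n with disjoint supports such that F_u = v + {x ∈ ℝL : −b_i ≤ x_i ≤ a_i for all i}. -/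
/-- The closed face `F_u = {x ∈ ℝL : ⌊u_i⌋ ≤ x_i ≤ ⌈u_i⌉ for all i}` of the arrangement `H_L`
determined by a point `u`. -/
def closedFace {n : ℕ} (L : Submodule ℤ (Fin n → ℤ)) (u : Fin n → ℝ) : Set (Fin n → ℝ) :=
  {x | x ∈ realSpan L ∧ ∀ i, (⌊u i⌋ : ℝ) ≤ x i ∧ x i ≤ (⌈u i⌉ : ℝ)}

open Matrix

lemma intMapMul {n m k : ℕ} (D : Matrix (Fin n) (Fin m) ℤ) (E : Matrix (Fin m) (Fin k) ℤ) :
    (D * E).map (Int.cast : ℤ → ℝ) = (D.map Int.cast : Matrix (Fin n) (Fin m) ℝ) * (E.map Int.cast : Matrix (Fin m) (Fin k) ℝ) :=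
  Matrix.map_mul (f := Int.castRingHom ℝ)

lemma intMapDet {m : ℕ} (D : Matrix (Fin m) (Fin m) ℤ) :
    (D.map (Int.cast : ℤ → ℝ)).det = (D.det : ℝ) := (RingHom.map_det (Int.castRingHom ℝ) D).symm

lemma kerBR {n m : ℕ} (B : Matrix (Fin n) (Fin m) ℤ)
    (hB : LinearIndependent ℤ B.transpose) :
    ∀ y : Fin m → ℝ, (B.map (Int.cast : ℤ → ℝ)).mulVec y = 0 → y = 0 := by
  have hdet : (Bᵀ * B).det ≠ 0 := by
    intro h
    obtain ⟨g, hg, hGg⟩ := Matrix.exists_mulVec_eq_zero_iff.2 h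
    have hBg : B.mulVec g = 0 := by
      have h2 : g ⬝ᵥ ((Bᵀ * B).mulVec g) = 0 := by rw [hGg, dotProduct_zero]
      rwa [← Matrix.mulVec_mulVec, Matrix.dotProduct_mulVec, Matrix.vecMul_transpose,
        dotProduct_self_eq_zero] at h2
    exact hg (funext (Fintype.linearIndependent_iff.1 hB g (by
      ext i
      simpa [Matrix.mulVec, dotProduct, mul_comm] using congrFun hBg i)))
  intro y hy
  have hGR : ((Bᵀ * B).map (Int.cast : ℤ → ℝ)).mulVec y = 0 := by
    have ht : (Bᵀ).map (Int.cast : ℤ → ℝ) = (B.map Int.cast)ᵀ := rfl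
    rw [intMapMul, ht, ← Matrix.mulVec_mulVec, hy, Matrix.mulVec_zero]
  by_contra hy0
  have : ((Bᵀ * B).map (Int.cast : ℤ → ℝ)).det = 0 :=
    Matrix.exists_mulVec_eq_zero_iff.1 ⟨y, hy0, hGR⟩
  rw [intMapDet] at this
  exact hdet (by exact_mod_cast this)

lemma castVec_mulVec {n m : ℕ} (B : Matrix (Fin n) (Fin m) ℤ) (z : Fin m → ℤ) :
    intCastVec (B.mulVec z) = (B.map (Int.cast : ℤ → ℝ)).mulVec (fun j => (z j : ℝ)) := by
  ext i
  simp [intCastVec, Matrix.mulVec, dotProduct, Matrix.map_apply]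

lemma realSpan_eq_range {n m : ℕ} (L : Submodule ℤ (Fin n → ℤ)) (B : Matrix (Fin n) (Fin m) ℤ)
    (hB : L = LinearMap.range B.mulVecLin) :
    realSpan L = LinearMap.range (B.map (Int.cast : ℤ → ℝ)).mulVecLin := by
  apply le_antisymm
  · rw [realSpan, Submodule.span_le]
    rintro x ⟨w, hw, rfl⟩
    rw [hB] at hw
    obtain ⟨z, hz⟩ := hw
    exact ⟨fun j => (z j : ℝ), by rw [Matrix.mulVecLin_apply, ← castVec_mulVec, ← hz]; rfl⟩
  · rintro x ⟨y, rfl⟩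
    rw [Matrix.mulVecLin_apply]
    have : (B.map (Int.cast : ℤ → ℝ)).mulVec y
        = ∑ j, y j • intCastVec (B.mulVec (Pi.single j 1)) := by
      ext i
      simp [Matrix.mulVec, dotProduct, intCastVec, Finset.sum_apply,
        Pi.single_apply, mul_comm]
    rw [this]
    exact Submodule.sum_mem _ fun j _ => Submodule.smul_mem _ _
      (Submodule.subset_span ⟨B.mulVec (Pi.single j 1), by rw [hB]; exact ⟨Pi.single j 1, rfl⟩, rfl⟩)

lemma exists_extreme {n : ℕ} (W : Submodule ℝ (Fin n → ℝ)) (u : Fin n → ℝ) (hu : u ∈ W) :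
    ∃ z, z ∈ W ∧ (∀ i, (⌊u i⌋ : ℝ) ≤ z i ∧ z i ≤ (⌈u i⌉ : ℝ)) ∧
      ∀ d ∈ W, (∀ i, (z i = (⌊u i⌋:ℝ) ∨ z i = (⌈u i⌉:ℝ)) → d i = 0) → d = 0 := by
  classical
  set Q : Set (Fin n → ℝ) :=
    (W : Set (Fin n → ℝ)) ∩ Set.pi Set.univ (fun i => Set.Icc (⌊u i⌋ : ℝ) (⌈u i⌉ : ℝ)) with hQ
  have hQne : u ∈ Q := ⟨hu, fun i _ => ⟨Int.floor_le _, Int.le_ceil _⟩⟩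
  have hQcomp : IsCompact Q := by
    have hbox : IsCompact (Set.pi Set.univ (fun i => Set.Icc (⌊u i⌋ : ℝ) (⌈u i⌉ : ℝ))) :=
      isCompact_univ_pi fun i => isCompact_Icc
    exact hbox.inter_left W.closed_of_finiteDimensional
  obtain ⟨z, hzext⟩ := hQcomp.extremePoints_nonempty ⟨u, hQne⟩
  rw [mem_extremePoints] at hzext
  obtain ⟨hzQ, hzext⟩ := hzext
  refine ⟨z, hzQ.1, fun i => ⟨(hzQ.2 i (Set.mem_univ i)).1, (hzQ.2 i (Set.mem_univ i)).2⟩,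
    fun d hdW hdT => ?_⟩
  -- choose epsilon
  set s : Fin n → ℝ := fun i =>
    if z i = (⌊u i⌋:ℝ) ∨ z i = (⌈u i⌉:ℝ) then 1
    else min (z i - ⌊u i⌋) ((⌈u i⌉:ℝ) - z i) with hs
  have hspos : ∀ i, 0 < s i := by
    intro i
    by_cases h : z i = (⌊u i⌋:ℝ) ∨ z i = (⌈u i⌉:ℝ)
    · simp [hs, h]
    · rw [show s i = min (z i - ⌊u i⌋) ((⌈u i⌉:ℝ) - z i) by simp [hs, h]]
      push_neg at h
      have h1 := (hzQ.2 i (Set.mem_univ i)).1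
      have h2 := (hzQ.2 i (Set.mem_univ i)).2
      exact lt_min (by have := lt_of_le_of_ne h1 (fun hh => h.1 hh.symm); linarith)
        (by have := lt_of_le_of_ne h2 h.2; linarith)
  set f : Fin n → ℝ := fun i => s i / (|d i| + 1) with hf
  have hfpos : ∀ i, 0 < f i := fun i => div_pos (hspos i) (by positivity)
  obtain ⟨ε, hε0, hεle⟩ : ∃ ε : ℝ, 0 < ε ∧ ∀ i, ε ≤ f i := by
    rcases isEmpty_or_nonempty (Fin n) with h | h
    · exact ⟨1, one_pos, fun i => isEmptyElim i⟩
    · exact ⟨Finset.univ.inf' Finset.univ_nonempty f,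
        (Finset.lt_inf'_iff _).2 fun i _ => hfpos i,
        fun i => Finset.inf'_le f (Finset.mem_univ i)⟩
  have hbound : ∀ i, ε * |d i| ≤ s i := by
    intro i
    have h1 : ε * |d i| ≤ f i * |d i| :=
      mul_le_mul_of_nonneg_right (hεle i) (abs_nonneg _)
    have h2 : f i * |d i| ≤ s i := by
      rw [hf]
      rw [div_mul_eq_mul_div, div_le_iff₀ (by positivity)]
      have := abs_nonneg (d i)
      nlinarith [hspos i]
    linarith
  have hmem : ∀ (t : ℝ), |t| ≤ ε → z + t • d ∈ Q := by
    intro t ht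
    refine ⟨W.add_mem hzQ.1 (W.smul_mem t hdW), fun i _ => ?_⟩
    by_cases hiT : z i = (⌊u i⌋:ℝ) ∨ z i = (⌈u i⌉:ℝ)
    · have : d i = 0 := hdT i hiT
      simp only [Pi.add_apply, Pi.smul_apply, this, smul_eq_mul, mul_zero, add_zero]
      exact ⟨(hzQ.2 i (Set.mem_univ i)).1, (hzQ.2 i (Set.mem_univ i)).2⟩
    · have hsi : s i = min (z i - ⌊u i⌋) ((⌈u i⌉:ℝ) - z i) := by rw [hs]; simp [hiT]
      have h1 : s i ≤ z i - ⌊u i⌋ := hsi ▸ min_le_left _ _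
      have h2 : s i ≤ (⌈u i⌉:ℝ) - z i := hsi ▸ min_le_right _ _
      have h3 : |t * d i| ≤ s i := by
        rw [abs_mul]
        calc |t| * |d i| ≤ ε * |d i| := mul_le_mul_of_nonneg_right ht (abs_nonneg _)
        _ ≤ s i := hbound i
      have h4 := abs_le.1 h3
      constructor
      · simp only [Pi.add_apply, Pi.smul_apply, smul_eq_mul]; linarith [h4.1]
      · simp only [Pi.add_apply, Pi.smul_apply, smul_eq_mul]; linarith [h4.2]
  have h1 : z + (-ε) • d ∈ Q := hmem (-ε) (by rw [abs_neg, abs_of_pos hε0])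
  have h2 : z + ε • d ∈ Q := hmem ε (by rw [abs_of_pos hε0])
  have hseg : z ∈ openSegment ℝ (z + (-ε) • d) (z + ε • d) := by
    refine ⟨1/2, 1/2, by norm_num, by norm_num, by norm_num, ?_⟩
    module
  have := (hzext _ h1 _ h2 hseg).2
  have hεd : ε • d = 0 := by
    have : z + ε • d = z := this
    linear_combination (norm := module) this
  have := smul_eq_zero.1 hεd
  rcases this with h | h
  · exact absurd h (ne_of_gt hε0)
  · exact h


lemma exists_good_rows {n m : ℕ} (M : Matrix (Fin n) (Fin m) ℝ) (T : Set (Fin n))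
    (hT : ∀ y : Fin m → ℝ, (∀ i ∈ T, M.mulVec y i = 0) → y = 0) :
    ∃ r : Fin m → Fin n, Function.Injective r ∧ (∀ k, r k ∈ T) ∧
      LinearIndependent ℝ (fun k => M (r k)) := by
  classical
  let C : Matrix T (Fin m) ℝ := Matrix.of fun i j => M i.1 j
  have hCker : LinearMap.ker C.mulVecLin = ⊥ := by
    rw [LinearMap.ker_eq_bot']
    intro y hy
    refine hT y fun i hi => ?_
    exact congrFun (by simpa [Matrix.mulVecLin_apply] using hy) (⟨i, hi⟩ : T)
  have hrank : C.rank = m := by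
    have h := LinearMap.finrank_range_add_finrank_ker C.mulVecLin
    rw [hCker, finrank_bot] at h
    simpa [Matrix.rank, Module.finrank_pi] using h
  have hV : Module.finrank ℝ (Submodule.span ℝ (Set.range fun i : T => M i.1)) = m := by
    have := (Matrix.rank_eq_finrank_span_row C).symm
    rw [hrank] at this
    exact this
  obtain ⟨s, hssub, hsspan, hsli⟩ :=
    exists_linearIndependent ℝ (Set.range fun i : T => M i.1)
  haveI : Fintype s := (hsli.setFinite).fintype
  have hcard : s.toFinset.card = m := by
    have h1 := finrank_span_set_eq_card hsli
    rw [hsspan, hV] at h1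
    exact h1.symm
  have hcard' : Fintype.card s = m := by rwa [Set.toFinset_card] at hcard
  let e : Fin m ≃ s := (Fintype.equivFinOfCardEq hcard').symm
  have hch : ∀ k : Fin m, ∃ i : T, M i.1 = (e k : Fin m → ℝ) := fun k => hssub (e k).2
  let r : Fin m → Fin n := fun k => (Classical.choose (hch k)).1
  have hrT : ∀ k, r k ∈ T := fun k => (Classical.choose (hch k)).2
  have hrM : ∀ k, M (r k) = (e k : Fin m → ℝ) := fun k => Classical.choose_spec (hch k)
  have hli : LinearIndependent ℝ (fun k => M (r k)) := by
    have : LinearIndependent ℝ (fun k : Fin m => ((e k : s) : Fin m → ℝ)) :=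
      hsli.comp (fun k => e k) (fun a b hab => e.injective hab)
    exact (funext hrM : (fun k => M (r k)) = _) ▸ this
  refine ⟨r, fun a b hab => ?_, hrT, hli⟩
  have : (e a : Fin m → ℝ) = (e b : Fin m → ℝ) := by rw [← hrM, ← hrM, hab]
  exact e.injective (Subtype.coe_injective this)

lemma exists_lattice_point_in_face {n : ℕ} (L : Submodule ℤ (Fin n → ℤ)) (hL : IsUnimodular L)
    (u : Fin n → ℝ) (hu : u ∈ realSpan L) :
    ∃ v ∈ L, ∀ i, (⌊u i⌋ : ℝ) ≤ (v i : ℝ) ∧ ((v i : ℝ)) ≤ (⌈u i⌉ : ℝ) := by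
  classical
  obtain ⟨m, B, hli, hminors, hrange⟩ := hL
  have hspan := realSpan_eq_range L B hrange
  set W := realSpan L with hW
  obtain ⟨z, hzW, hzbox, hzkey⟩ := exists_extreme W u hu
  set T : Set (Fin n) := {i | z i = (⌊u i⌋:ℝ) ∨ z i = (⌈u i⌉:ℝ)} with hT
  obtain ⟨r, hrinj, hrT, hrli⟩ := exists_good_rows (B.map (Int.cast : ℤ → ℝ)) T (by
    intro y hy
    apply kerBR B hli
    apply hzkey
    · rw [hspan]; exact ⟨y, rfl⟩
    · exact fun i hi => hy i hi)
  set D := B.submatrix r id with hD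
  have hDR : (B.map (Int.cast : ℤ → ℝ)).submatrix r id = D.map Int.cast := rfl
  have hUnitR : IsUnit ((B.map (Int.cast : ℤ → ℝ)).submatrix r id) := by
    apply Matrix.linearIndependent_rows_iff_isUnit.1
    exact hrli
  have hdetR : ((D.map (Int.cast : ℤ → ℝ))).det ≠ 0 := by
    rw [← hDR]
    exact (Matrix.isUnit_iff_isUnit_det _).1 hUnitR |>.ne_zero
  have hdetZ : D.det ≠ 0 := by
    rw [intMapDet] at hdetR
    exact_mod_cast hdetR
  have hUnitDet : IsUnit D.det := by
    have hDet : D.det ∈ ({0, 1, -1} : Set ℤ) := by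
      simpa [hD] using hminors ⟨r, hrinj⟩
    simp only [Set.mem_insert_iff, Set.mem_singleton_iff] at hDet
    rcases hDet with h | h | h
    · exact absurd h hdetZ
    · rw [h]; exact isUnit_one
    · rw [h]; exact isUnit_one.neg
  have hDinv : D⁻¹ * D = 1 := Matrix.nonsing_inv_mul D hUnitDet
  obtain ⟨y, hy⟩ : ∃ y, (B.map (Int.cast : ℤ → ℝ)).mulVec y = z := by
    rw [hspan] at hzW; obtain ⟨y, hy⟩ := hzW; exact ⟨y, hy⟩
  set c' : Fin m → ℤ := fun k => ⌊z (r k)⌋ with hc'def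
  have hc' : ∀ k, ((c' k : ℝ)) = z (r k) := by
    intro k
    rcases hrT k with h | h
    · rw [hc'def]; simp only; rw [h, Int.floor_intCast]
    · rw [hc'def]; simp only; rw [h, Int.floor_intCast]
  have hDy : (D.map (Int.cast : ℤ → ℝ)).mulVec y = fun k => (c' k : ℝ) := by
    ext k
    rw [hc' k]
    exact congrFun hy (r k)
  have hyint : y = fun j => ((D⁻¹.mulVec c') j : ℝ) := by
    calc y = (1 : Matrix (Fin m) (Fin m) ℝ).mulVec y := (Matrix.one_mulVec y).symm
      _ = ((D⁻¹.map (Int.cast : ℤ → ℝ)) * (D.map (Int.cast : ℤ → ℝ))).mulVec y := by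
          rw [← intMapMul, hDinv, Matrix.map_one _ Int.cast_zero Int.cast_one]
      _ = (D⁻¹.map (Int.cast : ℤ → ℝ)).mulVec ((D.map (Int.cast : ℤ → ℝ)).mulVec y) :=
          (Matrix.mulVec_mulVec _ _ _).symm
      _ = (D⁻¹.map (Int.cast : ℤ → ℝ)).mulVec (fun k => (c' k : ℝ)) := by rw [hDy]
      _ = fun j => ((D⁻¹.mulVec c') j : ℝ) := by
          ext j
          simp [Matrix.mulVec, dotProduct, Matrix.map_apply]
  refine ⟨B.mulVec (D⁻¹.mulVec c'), ?_, ?_⟩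
  · rw [hrange]; exact ⟨D⁻¹.mulVec c', rfl⟩
  · have hvz : intCastVec (B.mulVec (D⁻¹.mulVec c')) = z := by
      rw [castVec_mulVec, ← hyint]; exact hy
    intro i
    have h : ((B.mulVec (D⁻¹.mulVec c')) i : ℝ) = z i := congrFun hvz i
    rw [h]
    exact hzbox i

/-- if `L` is unimodular, every closed face of `H_L` is a lattice translate of a
standard box `{x ∈ ℝL : -b_i ≤ x_i ≤ a_i}` with `a, b ∈ {0,1}^n` of disjoint supports. -/
theorem closedFace_eq_lattice_translate_of_box
    {n : ℕ} (L : Submodule ℤ (Fin n → ℤ)) (hL : IsUnimodular L)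
    (u : Fin n → ℝ) (hu : u ∈ realSpan L) :
    ∃ v ∈ L, ∃ a b : Fin n → ℤ,
      (∀ i, a i = 0 ∨ a i = 1) ∧ (∀ i, b i = 0 ∨ b i = 1) ∧
      (∀ i, a i = 0 ∨ b i = 0) ∧
      closedFace L u =
        (fun x => intCastVec v + x) ''
          {x | x ∈ realSpan L ∧ ∀ i, -(b i : ℝ) ≤ x i ∧ x i ≤ (a i : ℝ)} := by
  obtain ⟨v, hvL, hv⟩ := exists_lattice_point_in_face L hL u hu
  have hvW : intCastVec v ∈ realSpan L := Submodule.subset_span ⟨v, hvL, rfl⟩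
  have hvb : ∀ i, ⌊u i⌋ ≤ v i ∧ v i ≤ ⌈u i⌉ := fun i =>
    ⟨by exact_mod_cast (hv i).1, by exact_mod_cast (hv i).2⟩
  have hcf : ∀ i, ⌈u i⌉ ≤ ⌊u i⌋ + 1 := fun i => Int.ceil_le_floor_add_one _
  refine ⟨v, hvL, fun i => ⌈u i⌉ - v i, fun i => v i - ⌊u i⌋, ?_, ?_, ?_, ?_⟩
  · intro i; dsimp only; have h1 := hvb i; have h2 := hcf i; omega
  · intro i; dsimp only; have h1 := hvb i; have h2 := hcf i; omega
  · intro i; dsimp only; have h1 := hvb i; have h2 := hcf i; omega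
  · ext x
    simp only [closedFace, Set.mem_setOf_eq, Set.mem_image]
    constructor
    · rintro ⟨hxW, hxb⟩
      refine ⟨x - intCastVec v, ⟨Submodule.sub_mem _ hxW hvW, fun i => ?_⟩, by
        abel⟩
      have h1 := (hxb i).1
      have h2 := (hxb i).2
      have hvi : intCastVec v i = (v i : ℝ) := rfl
      constructor
      · simp only [Pi.sub_apply, hvi]; push_cast; linarith
      · simp only [Pi.sub_apply, hvi]; push_cast; linarith
    · rintro ⟨w, ⟨hwW, hwb⟩, rfl⟩
      refine ⟨Submodule.add_mem _ hvW hwW, fun i => ?_⟩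
      have h1 := (hwb i).1
      have h2 := (hwb i).2
      have hvi : intCastVec v i = (v i : ℝ) := rfl
      push_cast at h1 h2
      constructor
      · simp only [Pi.add_apply, hvi]; linarith [(hvb i).1]
      · simp only [Pi.add_apply, hvi]; linarith [(hvb i).2]
end

section
/- Let L be a unimodular subgroup of ℤ^n. Then the closed faces of the arrangement H_L fall into finitely many classes modulo translation by L: there exists a finite collection 𝓕 of subsets of ℝ^n such that every closed face F_u (u ∈ ℝL) equals v + F for some v ∈ L and some F ∈ 𝓕. -/
/-- if `L` is unimodular, the closed faces of `H_L` fall into finitely many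
classes modulo translation by `L`. -/
theorem closedFaces_finitely_many_orbits
    {n : ℕ} (L : Submodule ℤ (Fin n → ℤ)) (hL : IsUnimodular L) :
    ∃ 𝓕 : Set (Set (Fin n → ℝ)), 𝓕.Finite ∧
      ∀ u ∈ realSpan L, ∃ v ∈ L, ∃ F ∈ 𝓕,
        closedFace L u = (fun x => intCastVec v + x) '' F := by
  obtain ⟨m, B, -, -, hLB⟩ := hL
  set g : Fin m → (Fin n → ℤ) := B.transpose with hg
  have hLspan : L = Submodule.span ℤ (Set.range g) := by
    rw [hLB, Matrix.range_mulVecLin]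
    rfl
  set f : Fin m → (Fin n → ℝ) := fun j => intCastVec (g j) with hf
  set C : ℤ := ∑ j : Fin m, ∑ i : Fin n, |g j i| with hCdef
  -- the finite family of boxes
  set box : (Fin n → ℤ) × (Fin n → ℤ) → Set (Fin n → ℝ) := fun p =>
    {x | x ∈ realSpan L ∧ ∀ i, (p.1 i : ℝ) ≤ x i ∧ x i ≤ (p.2 i : ℝ)} with hbox
  refine ⟨box '' (Set.Icc (fun _ => -C) (fun _ => C) ×ˢ Set.Icc (fun _ => -C) (fun _ => C)),
    ((Set.finite_Icc _ _).prod (Set.finite_Icc _ _)).image _, ?_⟩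
  intro u hu
  -- u is a real combination of the generators
  have hu' : u ∈ Submodule.span ℝ (Set.range f) := by
    refine Submodule.span_le.mpr ?_ hu
    rintro _ ⟨x, hx, rfl⟩
    rw [hLspan] at hx
    obtain ⟨c, hc⟩ := (Submodule.mem_span_range_iff_exists_fun ℤ).mp hx
    have : intCastVec x = ∑ j, (c j : ℝ) • f j := by
      funext i
      simp only [← hc, intCastVec, hf, Finset.sum_apply, Pi.smul_apply, smul_eq_mul]
      push_cast
      rfl
    rw [this]
    exact Submodule.sum_mem _ fun j _ => Submodule.smul_mem _ _
      (Submodule.subset_span ⟨j, rfl⟩)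
  obtain ⟨c, hc⟩ := (Submodule.mem_span_range_iff_exists_fun ℝ).mp hu'
  -- the lattice translate
  set v : Fin n → ℤ := ∑ j, ⌊c j⌋ • g j with hv
  have hvL : v ∈ L := by
    rw [hLspan]
    exact Submodule.sum_mem _ fun j _ => Submodule.smul_mem _ _
      (Submodule.subset_span ⟨j, rfl⟩)
  have hcv : intCastVec v ∈ realSpan L :=
    Submodule.subset_span ⟨v, hvL, rfl⟩
  -- coordinatewise formulas
  have hui : ∀ i, u i = ∑ j, c j * (g j i : ℝ) := by
    intro i
    rw [← hc]
    simp [hf, intCastVec, Finset.sum_apply]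
  have hvi : ∀ i, (v i : ℝ) = ∑ j, (⌊c j⌋ : ℝ) * (g j i : ℝ) := by
    intro i
    simp only [hv, Finset.sum_apply, Pi.smul_apply, smul_eq_mul]
    push_cast
    ring_nf
  -- bound on u - v
  have hbound : ∀ i, |u i - (v i : ℝ)| ≤ (C : ℝ) := by
    intro i
    rw [hui i, hvi i, ← Finset.sum_sub_distrib]
    calc |∑ j, (c j * (g j i : ℝ) - (⌊c j⌋ : ℝ) * (g j i : ℝ))|
        ≤ ∑ j, |c j * (g j i : ℝ) - (⌊c j⌋ : ℝ) * (g j i : ℝ)| :=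
          Finset.abs_sum_le_sum_abs _ _
      _ ≤ ∑ j, |(g j i : ℝ)| := by
          refine Finset.sum_le_sum fun j _ => ?_
          rw [← sub_mul, abs_mul]
          have h1 : |c j - (⌊c j⌋ : ℝ)| ≤ 1 := by
            rw [abs_of_nonneg (by linarith [Int.floor_le (c j)])]
            linarith [Int.lt_floor_add_one (c j)]
          nlinarith [abs_nonneg ((g j i : ℝ))]
      _ ≤ (C : ℝ) := by
          rw [hCdef]
          push_cast
          refine Finset.sum_le_sum fun j _ => ?_
          exact Finset.single_le_sum (f := fun i' => |(g j i' : ℝ)|)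
            (fun i' _ => abs_nonneg _) (Finset.mem_univ i)
  -- floors and ceilings of u - v lie in [-C, C]
  set a : Fin n → ℤ := fun i => ⌊u i⌋ - v i with ha
  set b : Fin n → ℤ := fun i => ⌈u i⌉ - v i with hb
  have haC : ∀ i, -C ≤ a i ∧ a i ≤ C := by
    intro i
    have h1 := abs_le.mp (hbound i)
    have hfl : a i = ⌊u i - (v i : ℝ)⌋ := by rw [Int.floor_sub_intCast]
    constructor
    · rw [hfl]
      exact Int.le_floor.mpr (by push_cast; linarith [h1.1])
    · have : (a i : ℝ) ≤ (C : ℝ) := by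
        rw [hfl]
        calc (⌊u i - (v i : ℝ)⌋ : ℝ) ≤ u i - (v i : ℝ) := Int.floor_le _
          _ ≤ (C : ℝ) := h1.2
      exact_mod_cast this
  have hbC : ∀ i, -C ≤ b i ∧ b i ≤ C := by
    intro i
    have h1 := abs_le.mp (hbound i)
    have hcl : b i = ⌈u i - (v i : ℝ)⌉ := by rw [Int.ceil_sub_intCast]
    constructor
    · have : (-C : ℝ) ≤ (b i : ℝ) := by
        rw [hcl]
        calc (-C : ℝ) ≤ u i - (v i : ℝ) := h1.1
          _ ≤ (⌈u i - (v i : ℝ)⌉ : ℝ) := Int.le_ceil _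
      exact_mod_cast this
    · rw [hcl]
      exact Int.ceil_le.mpr (by exact_mod_cast h1.2)
  refine ⟨v, hvL, box (a, b), ⟨(a, b), ⟨Set.mem_Icc.mpr ⟨fun i => (haC i).1, fun i => (haC i).2⟩,
    Set.mem_Icc.mpr ⟨fun i => (hbC i).1, fun i => (hbC i).2⟩⟩, rfl⟩, ?_⟩
  -- the set identity
  ext x
  constructor
  · rintro ⟨hxL, hxi⟩
    refine ⟨x - intCastVec v, ⟨Submodule.sub_mem _ hxL hcv, fun i => ?_⟩, by
      simp⟩
    have := hxi i
    constructor
    · have : (a i : ℝ) = (⌊u i⌋ : ℝ) - (v i : ℝ) := by push_cast [ha]; ring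
      rw [this]
      simp only [Pi.sub_apply, intCastVec]
      linarith [(hxi i).1]
    · have : (b i : ℝ) = (⌈u i⌉ : ℝ) - (v i : ℝ) := by push_cast [hb]; ring
      rw [this]
      simp only [Pi.sub_apply, intCastVec]
      linarith [(hxi i).2]
  · rintro ⟨y, ⟨hyL, hyi⟩, rfl⟩
    refine ⟨Submodule.add_mem _ hcv hyL, fun i => ?_⟩
    have h1 := (hyi i).1
    have h2 := (hyi i).2
    have ha' : (a i : ℝ) = (⌊u i⌋ : ℝ) - (v i : ℝ) := by push_cast [ha]; ring
    have hb' : (b i : ℝ) = (⌈u i⌉ : ℝ) - (v i : ℝ) := by push_cast [hb]; ring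
    rw [ha'] at h1
    rw [hb'] at h2
    constructor <;> simp only [Pi.add_apply, intCastVec] <;> linarith
end

section
/- Let k be a field, C an abelian group, π : ℤ^n → C a group homomorphism, and L = ker π. Let S = k[x_1,…,x_n,y_1,…,y_n], let k[C] be the group algebra of C over k, and let φ : S → k[C] ⊗_k k[z_1,…,z_n] be the k-algebra homomorphism determined by φ(x_i) = [π(e_i)] ⊗ z_i and φ(y_i) = [0] ⊗ z_i = 1 ⊗ z_i, where e_1,…,e_n is the standard basis of ℤ^n and [c] denotes the basis element of k[C] corresponding to c ∈ C. Then the kernel of φ equals the Lawrence ideal J_L. -/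
open MvPolynomial
open scoped TensorProduct

theorem ker_eq_span_of_basis {R M N G H : Type*} [CommRing R] [AddCommGroup M] [Module R M]
    [AddCommGroup N] [Module R N] (b : Module.Basis G R M) (c : Module.Basis H R N)
    (F : G → H) (φ : M →ₗ[R] N) (hφ : ∀ g, φ (b g) = c (F g)) :
    LinearMap.ker φ = Submodule.span R {x | ∃ g g', F g = F g' ∧ x = b g - b g'} := by
  classical
  apply le_antisymm
  · intro x hx
    rcases eq_or_ne x 0 with rfl | hx0
    · exact Submodule.zero_mem _
    have hG : Nonempty G := by
      by_contra h
      rw [not_nonempty_iff] at h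
      exact hx0 (b.repr.injective (Subsingleton.elim _ _))
    set v := b.repr x with hv
    have hmap : Finsupp.mapDomain F v = 0 := by
      have h1 : φ x = Finsupp.linearCombination R c (Finsupp.mapDomain F v) := by
        conv_lhs => rw [← b.linearCombination_repr x]
        rw [Finsupp.apply_linearCombination, Finsupp.linearCombination_mapDomain]
        have h2 : (⇑φ ∘ ⇑b) = (⇑c ∘ F) := funext hφ
        rw [h2]
      exact c.linearIndependent (h1.symm.trans hx)
    set σ : H → G := Function.invFun F with hσ
    have hσF : ∀ g, F (σ (F g)) = F g := fun g => Function.invFun_eq ⟨g, rfl⟩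
    have hx' : x = v.sum fun g r => r • b g := by
      conv_lhs => rw [← b.linearCombination_repr x]
      rfl
    have hzero : (v.sum fun g r => r • b (σ (F g))) = 0 := by
      have h3 := Finsupp.sum_mapDomain_index (f := F) (s := v)
        (h := fun h r => r • b (σ h)) (fun h => zero_smul R (b (σ h)))
        (fun h r₁ r₂ => add_smul r₁ r₂ (b (σ h)))
      rw [hmap, Finsupp.sum_zero_index] at h3
      exact h3.symm
    have hsplit : x = (v.sum fun g r => r • (b g - b (σ (F g))))
        + v.sum fun g r => r • b (σ (F g)) := by
      rw [hx', ← Finsupp.sum_add]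
      congr 1; ext g r; rw [smul_sub]; abel
    rw [hsplit, hzero, add_zero]
    refine Submodule.sum_mem _ fun g hg => Submodule.smul_mem _ _ ?_
    exact Submodule.subset_span ⟨g, σ (F g), (hσF g).symm, rfl⟩
  · rw [Submodule.span_le]
    rintro x ⟨g, g', hgg', rfl⟩
    simp [SetLike.mem_coe, LinearMap.mem_ker, map_sub, hφ, hgg']

theorem monomial_eq_prod_univ {σ : Type*} [Fintype σ] {k : Type*} [CommSemiring k]
    (u : σ →₀ ℕ) : (monomial u (1 : k)) = ∏ j, X j ^ u j := by
  classical
  rw [monomial_eq, map_one, one_mul, Finsupp.prod_fintype _ _ (fun j => pow_zero _)]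

theorem prod_tmul_eq {R A B ι : Type*} [CommSemiring R] [CommSemiring A] [CommSemiring B]
    [Algebra R A] [Algebra R B] (s : Finset ι) (x : ι → A) (y : ι → B) :
    ∏ i ∈ s, (x i ⊗ₜ[R] y i) = (∏ i ∈ s, x i) ⊗ₜ[R] (∏ i ∈ s, y i) := by
  classical
  induction s using Finset.induction_on with
  | empty => simp [Algebra.TensorProduct.one_def]
  | insert _ _ h ih => simp [Finset.prod_insert h, ih, Algebra.TensorProduct.tmul_mul_tmul]

/-- The Lawrence ideal `J_L` of a lattice `L ⊆ ℤ^ι`, in the polynomial ring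
`k[x_i, y_i : i ∈ ι]`: it is generated by the binomials `x^a y^b - x^b y^a` with `a - b ∈ L`. -/
noncomputable def lawrenceIdeal (k : Type*) [Field k] {ι : Type*} [Fintype ι]
    (L : Submodule ℤ (ι → ℤ)) : Ideal (MvPolynomial (ι ⊕ ι) k) :=
  Ideal.span { f | ∃ a b : ι → ℕ,
    (fun i => (a i : ℤ) - (b i : ℤ)) ∈ L ∧
    f = (∏ i, X (Sum.inl i) ^ a i) * (∏ i, X (Sum.inr i) ^ b i)
      - (∏ i, X (Sum.inl i) ^ b i) * (∏ i, X (Sum.inr i) ^ a i) }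

section Main

variable (k : Type*) [Field k] {n : ℕ} (C : Type*) [AddCommGroup C] (π : (Fin n → ℤ) →+ C)

noncomputable def toricMap : MvPolynomial (Fin n ⊕ Fin n) k →ₐ[k]
    (AddMonoidAlgebra k C ⊗[k] MvPolynomial (Fin n) k) :=
  MvPolynomial.aeval
      (Sum.elim
        (fun i : Fin n =>
          (AddMonoidAlgebra.of' k C (π (Pi.single i 1))) ⊗ₜ[k]
            (X i : MvPolynomial (Fin n) k))
        (fun i : Fin n =>
          (1 : AddMonoidAlgebra k C) ⊗ₜ[k] (X i : MvPolynomial (Fin n) k)))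

noncomputable def targetBasis : Module.Basis (C × ((Fin n) →₀ ℕ)) k
    (AddMonoidAlgebra k C ⊗[k] MvPolynomial (Fin n) k) :=
  Module.Basis.tensorProduct (AddMonoidAlgebra.basis C k) (MvPolynomial.basisMonomials (Fin n) k)

noncomputable def fiberMap (u : (Fin n ⊕ Fin n) →₀ ℕ) : C × ((Fin n) →₀ ℕ) :=
  (π (fun i => (u (Sum.inl i) : ℤ)),
    Finsupp.equivFunOnFinite.symm fun i => u (Sum.inl i) + u (Sum.inr i))

theorem prodXY_eq_monomial (a b : Fin n → ℕ) :
    (∏ i, (X (Sum.inl i) : MvPolynomial (Fin n ⊕ Fin n) k) ^ a i)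
      * (∏ i, X (Sum.inr i) ^ b i)
    = monomial (Finsupp.equivFunOnFinite.symm (Sum.elim a b)) 1 := by
  rw [monomial_eq_prod_univ, Fintype.prod_sum_type]
  simp

theorem toricMap_monomial (u : (Fin n ⊕ Fin n) →₀ ℕ) :
    toricMap k C π (monomial u 1) = targetBasis k C (fiberMap C π u) := by
  classical
  rw [monomial_eq_prod_univ, map_prod]
  have h1 : ∀ j : Fin n ⊕ Fin n, toricMap k C π (X j ^ u j)
      = (Sum.elim (fun i => AddMonoidAlgebra.single ((u (Sum.inl i)) • π (Pi.single i 1)) (1:k))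
          (fun _ => 1) j) ⊗ₜ[k]
        (X (Sum.elim id id j) ^ u j : MvPolynomial (Fin n) k) := by
    rintro (i | i) <;>
      simp [toricMap, map_pow, Algebra.TensorProduct.tmul_pow, AddMonoidAlgebra.of'_apply,
        AddMonoidAlgebra.single_pow, one_pow]
  simp only [h1]
  rw [prod_tmul_eq, Fintype.prod_sum_type, Fintype.prod_sum_type]
  simp only [Sum.elim_inl, Sum.elim_inr, Finset.prod_const_one, mul_one, id_eq]
  rw [AddMonoidAlgebra.prod_single]
  have hsum : (∑ i, (u (Sum.inl i)) • π (Pi.single i 1)) = π (fun i => (u (Sum.inl i) : ℤ)) := by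
    have : (fun i => (u (Sum.inl i) : ℤ)) = ∑ i, (u (Sum.inl i) : ℤ) • Pi.single i 1 := by
      funext j
      simp [Finset.sum_apply, Pi.single_apply]
    rw [this, map_sum]
    refine Finset.sum_congr rfl fun i _ => ?_
    rw [map_zsmul, natCast_zsmul]
  rw [hsum, Finset.prod_const_one]
  have hmon : (∏ i, (X i : MvPolynomial (Fin n) k) ^ u (Sum.inl i))
      * (∏ i, (X i : MvPolynomial (Fin n) k) ^ u (Sum.inr i))
      = monomial (Finsupp.equivFunOnFinite.symm fun i => u (Sum.inl i) + u (Sum.inr i)) 1 := by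
    rw [monomial_eq_prod_univ, ← Finset.prod_mul_distrib]
    refine Finset.prod_congr rfl fun i _ => ?_
    rw [← pow_add]
    congr 1
  rw [hmon]
  rw [targetBasis, Module.Basis.tensorProduct_apply, coe_basisMonomials]
  rfl

end Main

section Main2
variable (k : Type*) [Field k] {n : ℕ} (C : Type*) [AddCommGroup C] (π : (Fin n → ℤ) →+ C)

theorem gen_mem (s t : Fin n → ℕ)
    (hst : π (fun i => (s i : ℤ) - (t i : ℤ)) = 0) :
    (monomial (Finsupp.equivFunOnFinite.symm (Sum.elim s t)) 1 : MvPolynomial (Fin n ⊕ Fin n) k)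
      - monomial (Finsupp.equivFunOnFinite.symm (Sum.elim t s)) 1
      ∈ lawrenceIdeal k (AddSubgroup.toIntSubmodule π.ker) := by
  refine Ideal.subset_span ⟨s, t, ?_, ?_⟩
  · exact hst
  · rw [prodXY_eq_monomial, prodXY_eq_monomial]

theorem diff_mem (u v : (Fin n ⊕ Fin n) →₀ ℕ) (h : fiberMap C π u = fiberMap C π v) :
    (monomial u 1 : MvPolynomial (Fin n ⊕ Fin n) k) - monomial v 1
      ∈ lawrenceIdeal k (AddSubgroup.toIntSubmodule π.ker) := by
  classical
  set a : Fin n → ℕ := fun i => u (Sum.inl i) with ha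
  set b : Fin n → ℕ := fun i => u (Sum.inr i) with hb
  set a' : Fin n → ℕ := fun i => v (Sum.inl i) with ha'
  set b' : Fin n → ℕ := fun i => v (Sum.inr i) with hb'
  have hC : π (fun i => (a i : ℤ)) = π (fun i => (a' i : ℤ)) := congrArg Prod.fst h
  have hsum : ∀ i, a i + b i = a' i + b' i := by
    intro i
    have h2 := congrArg Prod.snd h
    simp only [fiberMap] at h2
    exact congrFun (Finsupp.equivFunOnFinite.symm.injective h2) i
  set s : Fin n → ℕ := fun i => a i - a' i with hs
  set t : Fin n → ℕ := fun i => a' i - a i with ht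
  set c : Fin n → ℕ := fun i => a i - s i with hc
  set e : Fin n → ℕ := fun i => b i - t i with he
  have key : ∀ i, a i = c i + s i ∧ b i = e i + t i ∧ a' i = c i + t i ∧ b' i = e i + s i := by
    intro i
    have := hsum i
    simp only [hs, ht, hc, he]
    omega
  have hu : u = Finsupp.equivFunOnFinite.symm (Sum.elim c e)
      + Finsupp.equivFunOnFinite.symm (Sum.elim s t) := by
    ext j
    rcases j with i | i <;> simp only [Finsupp.add_apply, Finsupp.coe_equivFunOnFinite_symm,
      Sum.elim_inl, Sum.elim_inr]
    · exact (key i).1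
    · exact (key i).2.1
  have hv : v = Finsupp.equivFunOnFinite.symm (Sum.elim c e)
      + Finsupp.equivFunOnFinite.symm (Sum.elim t s) := by
    ext j
    rcases j with i | i <;> simp only [Finsupp.add_apply, Finsupp.coe_equivFunOnFinite_symm,
      Sum.elim_inl, Sum.elim_inr]
    · exact (key i).2.2.1
    · exact (key i).2.2.2
  have hst : π (fun i => (s i : ℤ) - (t i : ℤ)) = 0 := by
    have h1 : (fun i => (s i : ℤ) - (t i : ℤ))
        = (fun i => (a i : ℤ)) - (fun i => (a' i : ℤ)) := by
      funext i
      have := (key i).1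
      have := (key i).2.2.1
      simp only [Pi.sub_apply]
      omega
    rw [h1, map_sub, hC, sub_self]
  have hfactor : (monomial u (1:k)) - monomial v 1
      = monomial (Finsupp.equivFunOnFinite.symm (Sum.elim c e)) 1
        * ((monomial (Finsupp.equivFunOnFinite.symm (Sum.elim s t)) 1)
          - monomial (Finsupp.equivFunOnFinite.symm (Sum.elim t s)) 1) := by
    rw [mul_sub, monomial_mul, monomial_mul, one_mul, ← hu, ← hv]
  rw [hfactor]
  exact Ideal.mul_mem_left _ _ (gen_mem k C π s t hst)

theorem ker_toric_map_eq_lawrenceIdeal' :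
    RingHom.ker (MvPolynomial.aeval (R := k)
      (Sum.elim
        (fun i : Fin n =>
          (AddMonoidAlgebra.of' k C (π (Pi.single i 1))) ⊗ₜ[k]
            (X i : MvPolynomial (Fin n) k))
        (fun i : Fin n =>
          (1 : AddMonoidAlgebra k C) ⊗ₜ[k] (X i : MvPolynomial (Fin n) k)))) =
    lawrenceIdeal k (AddSubgroup.toIntSubmodule π.ker) := by
  have hφ : ∀ g, (toricMap k C π).toLinearMap ((MvPolynomial.basisMonomials (Fin n ⊕ Fin n) k) g)
      = targetBasis k C (fiberMap C π g) := by
    intro g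
    have := congrFun (coe_basisMonomials (Fin n ⊕ Fin n) k) g
    rw [AlgHom.toLinearMap_apply, this, toricMap_monomial]
  have hker := ker_eq_span_of_basis (MvPolynomial.basisMonomials (Fin n ⊕ Fin n) k)
    (targetBasis k C (n := n)) (fiberMap C π) (toricMap k C π).toLinearMap hφ
  apply le_antisymm
  · intro f hf
    have hf' : f ∈ LinearMap.ker (toricMap k C π).toLinearMap := hf
    rw [hker] at hf'
    have hle : Submodule.span k {x | ∃ g g', fiberMap C π g = fiberMap C π g' ∧
        x = (MvPolynomial.basisMonomials (Fin n ⊕ Fin n) k) g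
          - (MvPolynomial.basisMonomials (Fin n ⊕ Fin n) k) g'}
        ≤ (lawrenceIdeal k (AddSubgroup.toIntSubmodule π.ker)).restrictScalars k := by
      rw [Submodule.span_le]
      rintro x ⟨g, g', hgg', rfl⟩
      have := congrFun (coe_basisMonomials (Fin n ⊕ Fin n) k) g
      have h2 := congrFun (coe_basisMonomials (Fin n ⊕ Fin n) k) g'
      simp only [this, h2]
      exact diff_mem k C π g g' hgg'
    exact hle hf'
  · rw [lawrenceIdeal, Ideal.span_le]
    rintro f ⟨a, b, hab, rfl⟩
    have hmem : π (fun i => (a i : ℤ)) = π (fun i => (b i : ℤ)) := by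
      have : ((fun i => (a i : ℤ)) - (fun i => (b i : ℤ))) ∈ π.ker := hab
      have h0 : π ((fun i => (a i : ℤ)) - (fun i => (b i : ℤ))) = 0 := this
      rw [map_sub, sub_eq_zero] at h0
      exact h0
    have hF : fiberMap C π (Finsupp.equivFunOnFinite.symm (Sum.elim a b))
        = fiberMap C π (Finsupp.equivFunOnFinite.symm (Sum.elim b a)) := by
      simp only [fiberMap, Finsupp.coe_equivFunOnFinite_symm, Sum.elim_inl, Sum.elim_inr]
      exact Prod.ext hmem (by rw [funext fun i => add_comm (a i) (b i)])
    show (toricMap k C π) _ = 0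
    rw [prodXY_eq_monomial, prodXY_eq_monomial, map_sub, toricMap_monomial, toricMap_monomial,
      hF, sub_self]

end Main2

/-- for a group homomorphism `π : ℤ^n → C` with kernel `L`, the kernel of the
`k`-algebra map `φ : k[x, y] → k[C] ⊗ k[z]` with `φ(x_i) = [π(e_i)] ⊗ z_i` and
`φ(y_i) = [0] ⊗ z_i = 1 ⊗ z_i` is the Lawrence ideal `J_L`. -/
theorem ker_toric_map_eq_lawrenceIdeal (k : Type*) [Field k] {n : ℕ}
    (C : Type*) [AddCommGroup C] (π : (Fin n → ℤ) →+ C) :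
    RingHom.ker (MvPolynomial.aeval (R := k)
      (Sum.elim
        (fun i : Fin n =>
          (AddMonoidAlgebra.of' k C (π (Pi.single i 1))) ⊗ₜ[k]
            (X i : MvPolynomial (Fin n) k))
        (fun i : Fin n =>
          (1 : AddMonoidAlgebra k C) ⊗ₜ[k] (X i : MvPolynomial (Fin n) k)))) =
    lawrenceIdeal k (AddSubgroup.toIntSubmodule π.ker) := by
  exact ker_toric_map_eq_lawrenceIdeal' k C π
end
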